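/- Let 1 ≤ q ≤ 2 ≤ p < ∞ and define r by 1/r = 1/q − 1/p. For every bounded linear operator A : ℓ^p → ℓ^q whose matrix entries a_{j,k} := (A e_k)_j are all nonnegative reals, one has ( ∑_k ( ∑_j a_{j,k}² )^{r/2} )^{1/r} ≤ ‖A‖, i.e. the Hardy–Littlewood column inequality holds with constant M = 1. -/

import Mathlib

open scoped ENNReal

set_option maxHeartbeats 2000000 in
/-- **Hardy–Littlewood column inequality for positive operators, with constant 1.**
For `1 ≤ q ≤ 2 ≤ p < ∞` and `1/r = 1/q - 1/p`, every bounded operator `A : ℓ^p → ℓ^q`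
whose matrix entries `(A e_k) j = a j k` are nonnegative reals satisfies
`(∑_k (∑_j (a j k)²)^(r/2))^(1/r) ≤ ‖A‖`. -/
theorem hardy_littlewood_column_positive (p q r : ℝ) (hq1 : 1 ≤ q) (hq2 : q ≤ 2) (hp2 : 2 ≤ p)
    [Fact (1 ≤ ENNReal.ofReal p)] [Fact (1 ≤ ENNReal.ofReal q)]
    (hr : 0 < r) (hrdef : 1 / r = 1 / q - 1 / p)
    (A : lp (fun _ : ℕ => ℂ) (ENNReal.ofReal p) →L[ℂ] lp (fun _ : ℕ => ℂ) (ENNReal.ofReal q))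
    (a : ℕ → ℕ → ℝ) (ha : ∀ j k, 0 ≤ a j k)
    (hAa : ∀ j k : ℕ, A (lp.single (ENNReal.ofReal p) k 1) j = (a j k : ℂ)) :
    (∑' k : ℕ, (∑' j : ℕ, a j k ^ (2 : ℝ)) ^ (r / 2)) ^ (1 / r) ≤ ‖A‖ := by
  classical
  have hp0 : (0:ℝ) < p := by linarith
  have hq0 : (0:ℝ) < q := by linarith
  have hr0 : r ≠ 0 := hr.ne'
  have hr2 : r / 2 ≠ 0 := by positivity
  set P := ENNReal.ofReal p with hPdef
  set Q := ENNReal.ofReal q with hQdef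
  have hPt : P.toReal = p := ENNReal.toReal_ofReal hp0.le
  have hQt : Q.toReal = q := ENNReal.toReal_ofReal hq0.le
  have hQle2 : Q ≤ (2 : ℝ≥0∞) := by
    rw [hQdef, show (2:ℝ≥0∞) = ENNReal.ofReal 2 by norm_num]
    exact ENNReal.ofReal_le_ofReal hq2
  have hsq : ∀ k, Summable fun j => a j k ^ (2:ℝ) := by
    intro k
    have h2 : Memℓp (fun j => (A (lp.single P k 1)) j) 2 :=
      (lp.memℓp _).of_exponent_ge hQle2
    have h3 := h2.summable (by norm_num : (0:ℝ) < (2:ℝ≥0∞).toReal)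
    have he : (fun j => ‖(A (lp.single P k 1)) j‖ ^ (2:ℝ≥0∞).toReal)
        = fun j => a j k ^ (2:ℝ) := by
      funext j
      rw [hAa j k, Complex.norm_real, Real.norm_eq_abs, abs_of_nonneg (ha j k)]
      norm_num
    rwa [he] at h3
  set C : ℕ → ℝ := fun k => ∑' j, a j k ^ (2:ℝ) with hCdef
  have hC0 : ∀ k, 0 ≤ C k := fun k => tsum_nonneg fun j => Real.rpow_nonneg (ha j k) _
  have haC : ∀ j k, a j k ^ (2:ℝ) ≤ C k := fun j k =>
    Summable.le_tsum (hsq k) j fun m _ => Real.rpow_nonneg (ha m k) _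
  -- the key per-finset bound
  have key : ∀ F : Finset ℕ, ∑ k ∈ F, (C k) ^ (r/2) ≤ ‖A‖ ^ r := by
    intro F
    set S := ∑ k ∈ F, (C k) ^ (r/2) with hSdef
    have hS0 : 0 ≤ S := Finset.sum_nonneg fun k _ => Real.rpow_nonneg (hC0 k) _
    rcases eq_or_lt_of_le hS0 with hS | hSpos
    · rw [← hS]; exact Real.rpow_nonneg (norm_nonneg A) r
    set β : ℝ := 2 - 2 / q with hβdef
    have h2q1 : 1 ≤ 2 / q := (le_div_iff₀ hq0).2 (by linarith)
    have h2q2 : 2 / q ≤ 2 := by rw [div_le_iff₀ hq0]; nlinarith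
    have hβ0 : 0 ≤ β := by rw [hβdef]; linarith
    have hβ1 : β ≤ 1 := by rw [hβdef]; linarith
    set E : ℝ := (r-2)*β/4 + (β-1)/2 with hEdef
    have hexp1 : r/(2*p) + 1 + E = r/2 := by
      have hrq : q * p = r * p - r * q := by
        field_simp at hrdef
        linarith
      rw [hEdef, hβdef]
      field_simp
      ring_nf
      nlinarith [hrq]
    set t : ℕ → ℝ := fun k => (C k) ^ (r / (2*p)) with htdef
    have ht0 : ∀ k, 0 ≤ t k := fun k => Real.rpow_nonneg (hC0 k) _
    set x : lp (fun _ : ℕ => ℂ) P := ∑ k ∈ F, (t k : ℂ) • lp.single P k 1 with hxdef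
    have hxj : ∀ j : ℕ, x j = if j ∈ F then (t j : ℂ) else 0 := by
      intro j
      rw [hxdef, lp.coeFn_sum]
      simp only [Finset.sum_apply, lp.coeFn_smul, Pi.smul_apply]
      by_cases hj : j ∈ F
      · rw [Finset.sum_eq_single_of_mem j hj (fun b _ hbj => by
          rw [lp.single_apply_ne P b _ (Ne.symm hbj)]; simp), if_pos hj]
        rw [lp.single_apply_self]
        simp
      · rw [if_neg hj, Finset.sum_eq_zero]
        intro b hb
        rw [lp.single_apply_ne P b _ (fun h => hj (by rw [h]; exact hb))]
        simp
    have hxnorm_p : ‖x‖ ^ p = S := by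
      have h1 := lp.norm_rpow_eq_tsum (p := P) (by rw [hPt]; exact hp0) x
      rw [hPt] at h1
      rw [h1, tsum_eq_sum (s := F) (by
        intro b hb
        rw [hxj b, if_neg hb]
        simp [Real.zero_rpow hp0.ne'])]
      rw [hSdef]
      refine Finset.sum_congr rfl fun k hk => ?_
      rw [hxj k, if_pos hk, Complex.norm_real, Real.norm_eq_abs, abs_of_nonneg (ht0 k),
        htdef, ← Real.rpow_mul (hC0 k)]
      congr 1
      field_simp
    have hxnorm : ‖x‖ = S ^ (1/p) := by
      have h1 : (‖x‖ ^ p) ^ ((1:ℝ)/p) = S ^ ((1:ℝ)/p) := by rw [hxnorm_p]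
      rwa [← Real.rpow_mul (norm_nonneg x), mul_one_div, div_self hp0.ne',
        Real.rpow_one] at h1
    set u : ℕ → ℝ := fun j => ∑ k ∈ F, t k * a j k with hudef
    have hu0 : ∀ j, 0 ≤ u j := fun j =>
      Finset.sum_nonneg fun k _ => mul_nonneg (ht0 k) (ha j k)
    have hAx : ∀ j, (A x) j = (u j : ℂ) := by
      intro j
      have hAxsum : A x = ∑ k ∈ F, (t k : ℂ) • A (lp.single P k 1) := by
        rw [hxdef, map_sum]
        exact Finset.sum_congr rfl fun k _ => A.map_smul _ _
      rw [hAxsum, lp.coeFn_sum, Finset.sum_apply]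
      simp only [lp.coeFn_smul, Pi.smul_apply, hAa, smul_eq_mul]
      show _ = ((∑ k ∈ F, t k * a j k : ℝ) : ℂ)
      push_cast
      exact Finset.sum_congr rfl fun k _ => congrArg _ (hAa j k)
    have huq : ‖A x‖ ^ q = ∑' j, u j ^ q := by
      have h1 := lp.norm_rpow_eq_tsum (p := Q) (by rw [hQt]; exact hq0) (A x)
      rw [hQt] at h1
      rw [h1]
      exact tsum_congr fun j => by
        rw [hAx j, Complex.norm_real, Real.norm_eq_abs, abs_of_nonneg (hu0 j)]
    have husum : Summable fun j => u j ^ q := by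
      have h3 := (lp.memℓp (A x)).summable (by rw [hQt]; exact hq0)
      rw [hQt] at h3
      have he : (fun j => ‖(A x) j‖ ^ q) = fun j => u j ^ q := funext fun j => by
        rw [hAx j, Complex.norm_real, Real.norm_eq_abs, abs_of_nonneg (hu0 j)]
      rwa [he] at h3
    have hAxle : ‖A x‖ ≤ ‖A‖ * S ^ (1/p) := by
      rw [← hxnorm]; exact A.le_opNorm x
    set G : ℕ → ℝ := fun j => ∑ k ∈ F, (a j k)^(2:ℝ) * (C k)^((r-2)/2) with hGdef
    have hG0 : ∀ j, 0 ≤ G j := fun j => Finset.sum_nonneg fun k _ =>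
      mul_nonneg (Real.rpow_nonneg (ha j k) _) (Real.rpow_nonneg (hC0 k) _)
    have hGsummand : ∀ k ∈ F, Summable fun j => (a j k)^(2:ℝ) * (C k)^((r-2)/2) :=
      fun k _ => (hsq k).mul_right _
    have hGsum : Summable G := by rw [hGdef]; exact summable_sum hGsummand
    have hCC : ∀ k, C k * (C k)^((r-2)/2) = (C k)^(r/2) := by
      intro k
      have h12 : (1:ℝ) + (r-2)/2 = r/2 := by ring
      nth_rewrite 1 [← Real.rpow_one (C k)]
      rw [← Real.rpow_add' (hC0 k) (by rw [h12]; exact hr2), h12]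
    have hGtsum : ∑' j, G j = S := by
      rw [hGdef, Summable.tsum_finsetSum hGsummand, hSdef]
      refine Finset.sum_congr rfl fun k _ => ?_
      rw [tsum_mul_right]
      show C k * (C k)^((r-2)/2) = (C k)^(r/2)
      exact hCC k
    set w : ℕ → ℝ := fun j => (G j) ^ (β/2) with hwdef
    have hw0 : ∀ j, 0 ≤ w j := fun j => Real.rpow_nonneg (hG0 j) _
    have hlow : ∀ j, ∀ k ∈ F, t k * ((a j k)^(2:ℝ) * (C k)^E) ≤ (t k * a j k) * w j := by
      intro j k hk
      have hterm : (a j k)^(2:ℝ) * (C k)^((r-2)/2) ≤ G j :=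
        Finset.single_le_sum (f := fun i => (a j i)^(2:ℝ) * (C i)^((r-2)/2))
          (fun i _ => mul_nonneg (Real.rpow_nonneg (ha j i) _)
            (Real.rpow_nonneg (hC0 i) _)) hk
      rcases eq_or_lt_of_le (ha j k) with h0 | hapos
      · rw [← h0, Real.zero_rpow (by norm_num : (2:ℝ) ≠ 0)]
        simp [mul_nonneg, ht0 k, hw0 j]
      · have hCpos : 0 < C k :=
          lt_of_lt_of_le (Real.rpow_pos_of_pos hapos 2) (haC j k)
        have hax2 : a j k ≤ (C k) ^ ((1:ℝ)/2) := by
          have h1 : ((a j k)^(2:ℝ)) ^ ((1:ℝ)/2) ≤ (C k) ^ ((1:ℝ)/2) :=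
            Real.rpow_le_rpow (Real.rpow_nonneg (ha j k) _) (haC j k) (by norm_num)
          rwa [← Real.rpow_mul (ha j k), show (2:ℝ) * (1/2) = 1 by norm_num,
            Real.rpow_one] at h1
        have hsub : (C k) ^ ((β-1)/2) ≤ (a j k) ^ (β-1) := by
          have h2 : ((C k) ^ ((1:ℝ)/2)) ^ (β-1) ≤ (a j k) ^ (β-1) :=
            Real.rpow_le_rpow_of_nonpos hapos hax2 (by linarith)
          rwa [← Real.rpow_mul (hC0 k), show (1:ℝ)/2*(β-1) = (β-1)/2 by ring] at h2
        have hwlb : ((a j k)^(2:ℝ) * (C k)^((r-2)/2)) ^ (β/2) ≤ w j := by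
          show _ ≤ (G j) ^ (β/2)
          exact Real.rpow_le_rpow (mul_nonneg (Real.rpow_nonneg (ha j k) _)
            (Real.rpow_nonneg (hC0 k) _)) hterm (by positivity)
        have hexpand : ((a j k)^(2:ℝ) * (C k)^((r-2)/2)) ^ (β/2)
            = (a j k)^β * (C k)^((r-2)*β/4) := by
          rw [Real.mul_rpow (Real.rpow_nonneg (ha j k) _) (Real.rpow_nonneg (hC0 k) _),
            ← Real.rpow_mul (ha j k), ← Real.rpow_mul (hC0 k),
            show (2:ℝ)*(β/2) = β by ring, show (r-2)/2*(β/2) = (r-2)*β/4 by ring]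
        have hE : (C k)^E = (C k)^((β-1)/2) * (C k)^((r-2)*β/4) := by
          rw [← Real.rpow_add hCpos]
          congr 1
          rw [hEdef]; ring
        have ha1b : (a j k) * ((a j k)^β * (C k)^((r-2)*β/4))
            = ((a j k)^(2:ℝ) * (a j k)^(β-1)) * (C k)^((r-2)*β/4) := by
          rw [← Real.rpow_add hapos, ← mul_assoc]
          nth_rewrite 1 [← Real.rpow_one (a j k)]
          rw [← Real.rpow_add hapos, show (2:ℝ) + (β - 1) = 1 + β by ring]
        have hchain : (a j k)^(2:ℝ) * (C k)^E
            ≤ (a j k) * (((a j k)^(2:ℝ) * (C k)^((r-2)/2)) ^ (β/2)) := by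
          rw [hexpand, hE, ha1b]
          have := mul_le_mul_of_nonneg_left hsub (Real.rpow_nonneg (ha j k) (2:ℝ))
          calc (a j k)^(2:ℝ) * ((C k)^((β-1)/2) * (C k)^((r-2)*β/4))
              = ((a j k)^(2:ℝ) * (C k)^((β-1)/2)) * (C k)^((r-2)*β/4) := by ring
            _ ≤ ((a j k)^(2:ℝ) * (a j k)^(β-1)) * (C k)^((r-2)*β/4) :=
                mul_le_mul_of_nonneg_right this (Real.rpow_nonneg (hC0 k) _)
        calc t k * ((a j k)^(2:ℝ) * (C k)^E)
            ≤ t k * ((a j k) * (((a j k)^(2:ℝ) * (C k)^((r-2)/2)) ^ (β/2))) :=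
              mul_le_mul_of_nonneg_left hchain (ht0 k)
          _ ≤ t k * ((a j k) * w j) :=
              mul_le_mul_of_nonneg_left
                (mul_le_mul_of_nonneg_left hwlb hapos.le) (ht0 k)
          _ = (t k * a j k) * w j := by ring
    set L : ℕ → ℝ := fun j => ∑ k ∈ F, t k * ((a j k)^(2:ℝ) * (C k)^E) with hLdef
    have hLsummand : ∀ k ∈ F, Summable fun j => t k * ((a j k)^(2:ℝ) * (C k)^E) :=
      fun k _ => (((hsq k).mul_right _).mul_left _)
    have hLsum : Summable L := by rw [hLdef]; exact summable_sum hLsummand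
    have hLts : ∑' j, L j = S := by
      rw [hLdef, Summable.tsum_finsetSum hLsummand, hSdef]
      refine Finset.sum_congr rfl fun k _ => ?_
      rw [tsum_mul_left, tsum_mul_right]
      show t k * (C k * (C k)^E) = (C k)^(r/2)
      rw [htdef]
      show (C k)^(r/(2*p)) * (C k * (C k)^E) = (C k)^(r/2)
      nth_rewrite 2 [← Real.rpow_one (C k)]
      rw [← mul_assoc,
        ← Real.rpow_add' (hC0 k) (by positivity),
        ← Real.rpow_add' (hC0 k) (by rw [hexp1]; exact hr2), hexp1]
    have hpoint : ∀ j, L j ≤ w j * u j := by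
      intro j
      calc L j ≤ ∑ k ∈ F, (t k * a j k) * w j := Finset.sum_le_sum (hlow j)
        _ = w j * u j := by rw [← Finset.sum_mul, mul_comm]
    have holder : Summable (fun j => w j * u j)
        ∧ ∑' j, w j * u j ≤ S ^ (1 - 1/q) * ‖A x‖ := by
      rcases eq_or_lt_of_le hq1 with hqe | hq1'
      · have hβz : β = 0 := by rw [hβdef, ← hqe]; norm_num
        have hw1 : ∀ j, w j = 1 := fun j => by
          show (G j) ^ (β/2) = 1
          rw [hβz]
          norm_num
        have huu : (fun j => u j ^ q) = fun j => u j :=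
          funext fun j => by rw [← hqe, Real.rpow_one]
        constructor
        · have h4 := husum
          rw [huu] at h4
          refine h4.congr fun j => ?_
          rw [hw1 j, one_mul]
        · have h1 : ∑' j, w j * u j = ‖A x‖ ^ q := by
            rw [huq]
            exact tsum_congr fun j => by rw [hw1 j, one_mul, ← hqe, Real.rpow_one]
          rw [h1]
          have hZ : ‖A x‖ ^ q = ‖A x‖ :=
            (congrArg (fun e : ℝ => ‖A x‖ ^ e) hqe.symm).trans (Real.rpow_one _)
          have hZ2 : (1:ℝ) - 1/q = 0 := by rw [← hqe]; norm_num
          rw [hZ, hZ2, Real.rpow_zero, one_mul]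
      · have hq1ne : q - 1 ≠ 0 := by linarith
        set q' : ℝ := q / (q-1) with hq'def
        have hconj : q'.HolderConjugate q := (Real.HolderConjugate.conjExponent hq1').symm
        have eq3 : (1:ℝ) - 1/q = (q-1)/q := by rw [sub_div, div_self hq0.ne']
        have eq1 : β/2 = 1 - 1/q := by rw [hβdef]; ring
        have hb2 : β/2 * q' = 1 := by
          rw [eq1, eq3, hq'def, div_mul_div_comm, mul_comm (q-1) q,
            div_self (mul_ne_zero hq0.ne' hq1ne)]
        have hwq : (fun j => w j ^ q') = G := funext fun j => by
          show ((G j) ^ (β/2)) ^ q' = G j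
          rw [← Real.rpow_mul (hG0 j), hb2, Real.rpow_one]
        have hGsum' : Summable fun j => w j ^ q' := by rw [hwq]; exact hGsum
        obtain ⟨hsummable, hle⟩ :=
          Real.summable_and_inner_le_Lp_mul_Lq_tsum_of_nonneg hconj hw0 hu0 hGsum' husum
        refine ⟨hsummable, hle.trans_eq ?_⟩
        have h2 : ∑' j, w j ^ q' = S := by rw [hwq, hGtsum]
        have h3 : (1:ℝ)/q' = 1 - 1/q := by rw [hq'def, one_div_div]; exact eq3.symm
        have h4 : (‖A x‖ ^ q) ^ ((1:ℝ)/q) = ‖A x‖ := by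
          rw [← Real.rpow_mul (norm_nonneg _), mul_one_div, div_self hq0.ne',
            Real.rpow_one]
        rw [h2, ← huq, h3, h4]
    -- combine
    have step1 : S ≤ ∑' j, w j * u j := by
      rw [← hLts]
      exact Summable.tsum_le_tsum hpoint hLsum holder.1
    have step2 : S ≤ S ^ (1 - 1/q) * (‖A‖ * S ^ (1/p)) :=
      step1.trans (holder.2.trans
        (mul_le_mul_of_nonneg_left hAxle (Real.rpow_nonneg hS0 _)))
    have hSS : S ^ (1 - 1/q) * S ^ (1/p) = S ^ (1 - 1/r) := by
      rw [← Real.rpow_add hSpos]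
      congr 1
      rw [hrdef]; ring
    have step3 : S ≤ ‖A‖ * S ^ (1 - 1/r) := by
      calc S ≤ S ^ (1 - 1/q) * (‖A‖ * S ^ (1/p)) := step2
        _ = ‖A‖ * (S ^ (1 - 1/q) * S ^ (1/p)) := mul_left_comm _ _ _
        _ = ‖A‖ * S ^ (1 - 1/r) := by rw [hSS]
    have hXpos : 0 < S ^ (1 - 1/r) := Real.rpow_pos_of_pos hSpos _
    have hdiv : S ^ (1/r) ≤ ‖A‖ := by
      have hSid : S ^ (1/r) = S / S ^ (1 - 1/r) := by
        rw [eq_div_iff hXpos.ne', ← Real.rpow_add hSpos]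
        rw [show 1/r + (1 - 1/r) = 1 by ring, Real.rpow_one]
      rw [hSid]
      exact (div_le_iff₀ hXpos).2 (by linarith [step3])
    calc S = (S ^ (1/r)) ^ r := by
          rw [← Real.rpow_mul hS0, one_div_mul_cancel hr0, Real.rpow_one]
      _ ≤ ‖A‖ ^ r := Real.rpow_le_rpow (Real.rpow_nonneg hS0 _) hdiv hr.le
  -- assemble
  have hCsum : Summable fun k => (C k) ^ (r/2) :=
    summable_of_sum_le (fun k => Real.rpow_nonneg (hC0 k) _) key
  have hts : (∑' k, (C k) ^ (r/2)) ≤ ‖A‖ ^ r := Summable.tsum_le_of_sum_le hCsum key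
  have hfin := Real.rpow_le_rpow
    (tsum_nonneg fun k => Real.rpow_nonneg (hC0 k) _) hts (by positivity : (0:ℝ) ≤ 1/r)
  rwa [← Real.rpow_mul (norm_nonneg A), mul_one_div, div_self hr0,
    Real.rpow_one] at hfin
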